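/- arXiv:1209.3493 — 2 statements merged into one kernel-verified Lean document; each statement's English description precedes it below -/
import Mathlib

section
/- For every integer k with 0 <= k <= floor((n-3)/2), the vector P_k = -(n-2k-1)(n-2k-2) Z_{n-k} + sum_{i=k+1}^{n-k-1} [2(i-k-1) Z_i + (2i-n)(X_i + Y_i)] is a nonzero eigenvector of the adjacency matrix of SR(3,n) with eigenvalue k-2. -/
open Finset

abbrev SRVert (d n : ℕ) : Type := {x : Fin d → ℕ // ∑ i, x i = n}

noncomputable instance SRVert.fintype (d n : ℕ) : Fintype (SRVert d n) :=
  Fintype.ofInjective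
    (fun x : SRVert d n => fun i => (⟨x.1 i, by
      have h := Finset.single_le_sum (f := x.1)
        (fun j _ => Nat.zero_le (x.1 j)) (Finset.mem_univ i)
      have h2 := x.2
      omega⟩ : Fin (n+1)))
    (fun x y h => Subtype.ext (funext fun i => congrArg Fin.val (congrFun h i)))

/-- The simplicial rook graph: two vertices are adjacent if they differ in
exactly two coordinates. -/
def SR (d n : ℕ) : SimpleGraph (SRVert d n) where
  Adj x y := (Finset.univ.filter fun i => x.1 i ≠ y.1 i).card = 2
  symm := by
    constructor
    intro x y h
    rw [show (Finset.univ.filter fun i => y.1 i ≠ x.1 i)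
        = (Finset.univ.filter fun i => x.1 i ≠ y.1 i) by
      apply Finset.filter_congr; intro i _; simp [ne_comm]]
    exact h
  loopless := by constructor; intro z h; simp at h

instance (d n : ℕ) : DecidableRel (SR d n).Adj :=
  fun x y => inferInstanceAs (Decidable (_ = 2))


/-- Characteristic vector of the lattice line `{v : v₀ = i}` in `ℝ^{V(3,n)}`. -/
def Xv (n i : ℕ) : SRVert 3 n → ℝ := fun v => if v.1 0 = i then 1 else 0

/-- Characteristic vector of the lattice line `{v : v₁ = j}`. -/
def Yv (n j : ℕ) : SRVert 3 n → ℝ := fun v => if v.1 1 = j then 1 else 0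

/-- Characteristic vector of the lattice line `{v : v₂ = k}`. -/
def Zv (n k : ℕ) : SRVert 3 n → ℝ := fun v => if v.1 2 = k then 1 else 0

/-- The all-ones vector. -/
def Jv (n : ℕ) : SRVert 3 n → ℝ := fun _ => 1

/-- Standard basis vector `e_v`. -/
def ev {d n : ℕ} (v : SRVert d n) : SRVert d n → ℝ := fun w => if w = v then 1 else 0


/-! ### Auxiliary lemmas -/

lemma vsum {n : ℕ} (v : SRVert 3 n) : v.1 0 + v.1 1 + v.1 2 = n := by
  have h := v.2; rw [Fin.sum_univ_three] at h; omega

lemma vle {n : ℕ} (v : SRVert 3 n) (r : Fin 3) : v.1 r ≤ n := by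
  have h := Finset.single_le_sum (f := v.1) (fun j _ => Nat.zero_le (v.1 j))
    (Finset.mem_univ r)
  rw [v.2] at h; exact h

lemma adj_coeff {n : ℕ} (v w : SRVert 3 n) :
    (if (SR 3 n).Adj v w then (1:ℝ) else 0) =
      (if w.1 0 = v.1 0 then 1 else 0) + (if w.1 1 = v.1 1 then 1 else 0)
        + (if w.1 2 = v.1 2 then 1 else 0) - 3 * (if w = v then 1 else 0) := by
  have hv := vsum v; have hw := vsum w
  have e : ∀ x y : ℕ, (if x ≠ y then (1:ℕ) else 0) = (if y = x then 0 else 1) := by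
    intro x y; by_cases h : y = x
    · simp [h]
    · rw [if_pos (fun hh => h hh.symm), if_neg h]
  have hadj : (SR 3 n).Adj v w ↔
      ((if w.1 0 = v.1 0 then 0 else 1) + (if w.1 1 = v.1 1 then 0 else 1)
        + (if w.1 2 = v.1 2 then 0 else 1) : ℕ) = 2 := by
    show (Finset.univ.filter fun i => v.1 i ≠ w.1 i).card = 2 ↔ _
    rw [Finset.card_filter, Fin.sum_univ_three, e, e, e]
  by_cases h0 : w.1 0 = v.1 0 <;> by_cases h1 : w.1 1 = v.1 1 <;>
    by_cases h2 : w.1 2 = v.1 2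
  · have he : w = v := Subtype.ext (funext fun j => by fin_cases j <;> assumption)
    rw [if_neg (show ¬(SR 3 n).Adj v w from
        fun h => (SR 3 n).loopless.irrefl v (by rwa [he] at h)),
      if_pos h0, if_pos h1, if_pos h2, if_pos he]
    norm_num
  · exact absurd (by omega) h2
  · exact absurd (by omega) h1
  · have hA : (SR 3 n).Adj v w := hadj.2 (by simp [h0, h1, h2])
    have wne : w ≠ v := fun h => h1 (by rw [h])
    rw [if_pos hA, if_pos h0, if_neg h1, if_neg h2, if_neg wne]; norm_num
  · exact absurd (by omega) h0
  · have hA : (SR 3 n).Adj v w := hadj.2 (by simp [h0, h1, h2])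
    have wne : w ≠ v := fun h => h0 (by rw [h])
    rw [if_pos hA, if_neg h0, if_pos h1, if_neg h2, if_neg wne]; norm_num
  · have hA : (SR 3 n).Adj v w := hadj.2 (by simp [h0, h1, h2])
    have wne : w ≠ v := fun h => h0 (by rw [h])
    rw [if_pos hA, if_neg h0, if_neg h1, if_pos h2, if_neg wne]; norm_num
  · have hA : ¬ (SR 3 n).Adj v w := fun h => by
      have := hadj.1 h; simp [h0, h1, h2] at this
    have wne : w ≠ v := fun h => h0 (by rw [h])
    rw [if_neg hA, if_neg h0, if_neg h1, if_neg h2, if_neg wne]; norm_num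

lemma mulVec_eq {n : ℕ} (f : SRVert 3 n → ℝ) (v : SRVert 3 n) :
    ((SR 3 n).adjMatrix ℝ).mulVec f v =
      (∑ w, if w.1 0 = v.1 0 then f w else 0)
      + (∑ w, if w.1 1 = v.1 1 then f w else 0)
      + (∑ w, if w.1 2 = v.1 2 then f w else 0) - 3 * f v := by
  have h1 : ((SR 3 n).adjMatrix ℝ).mulVec f v
      = ∑ w, (if (SR 3 n).Adj v w then (1:ℝ) else 0) * f w := by
    simp [Matrix.mulVec, dotProduct, SimpleGraph.adjMatrix]
  have h2 : ∀ w : SRVert 3 n, (if (SR 3 n).Adj v w then (1:ℝ) else 0) * f w =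
      (if w.1 0 = v.1 0 then f w else 0) + (if w.1 1 = v.1 1 then f w else 0)
      + (if w.1 2 = v.1 2 then f w else 0) - 3 * (if w = v then f w else 0) := by
    intro w; rw [adj_coeff]; by_cases h0 : w.1 0 = v.1 0 <;>
      by_cases h1 : w.1 1 = v.1 1 <;> by_cases h2 : w.1 2 = v.1 2 <;>
      by_cases he : w = v <;> simp [h0, h1, h2, he] <;> ring
  rw [h1, Finset.sum_congr rfl fun w _ => h2 w, Finset.sum_sub_distrib,
    Finset.sum_add_distrib, Finset.sum_add_distrib, ← Finset.mul_sum,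
    Finset.sum_ite_eq' Finset.univ v f, if_pos (Finset.mem_univ v)]

lemma ext2 {n : ℕ} (v w : SRVert 3 n) (r s : Fin 3) (hrs : r ≠ s)
    (h1 : v.1 r = w.1 r) (h2 : v.1 s = w.1 s) : v = w := by
  have hv := vsum v; have hw := vsum w
  apply Subtype.ext; funext j
  fin_cases r <;> fin_cases s <;> fin_cases j <;> simp_all <;> omega

lemma vle2 {n : ℕ} (v : SRVert 3 n) (r s : Fin 3) (hrs : r ≠ s) :
    v.1 r + v.1 s ≤ n := by
  have hv := vsum v
  fin_cases r <;> fin_cases s <;> simp_all <;> omega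

lemma pairSum {n : ℕ} (r s : Fin 3) (hrs : r ≠ s) (a i : ℕ) :
    ∑ w : SRVert 3 n, (if w.1 r = a then (if w.1 s = i then (1:ℝ) else 0) else 0)
      = if a + i ≤ n then 1 else 0 := by
  by_cases h : a + i ≤ n
  · rw [if_pos h]
    have hsum : ∑ j, (fun j => if j = r then a else if j = s then i else n - a - i) j = n := by
      rw [Fin.sum_univ_three]
      fin_cases r <;> fin_cases s <;> simp_all <;> omega
    set w₀ : SRVert 3 n := ⟨_, hsum⟩ with hw₀
    have key : ∀ w : SRVert 3 n,
        (if w.1 r = a then (if w.1 s = i then (1:ℝ) else 0) else 0)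
          = if w = w₀ then 1 else 0 := by
      intro w
      have hra : w₀.1 r = a := by simp [hw₀]
      have hsi : w₀.1 s = i := by simp [hw₀, Ne.symm hrs]
      by_cases he : w = w₀
      · rw [if_pos he, he, hra, hsi, if_pos rfl, if_pos rfl]
      · rw [if_neg he]
        by_cases h1 : w.1 r = a
        · rw [if_pos h1]
          by_cases h2 : w.1 s = i
          · exact absurd (ext2 w w₀ r s hrs (by rw [h1, hra]) (by rw [h2, hsi])) he
          · rw [if_neg h2]
        · rw [if_neg h1]
    rw [Finset.sum_congr rfl fun w _ => key w, Finset.sum_ite_eq' Finset.univ w₀,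
      if_pos (Finset.mem_univ w₀)]
  · rw [if_neg h]
    apply Finset.sum_eq_zero
    intro w _
    by_cases h1 : w.1 r = a
    · rw [if_pos h1]
      by_cases h2 : w.1 s = i
      · exact absurd (h1 ▸ h2 ▸ vle2 w r s hrs) h
      · rw [if_neg h2]
    · rw [if_neg h1]

lemma lineSum {n : ℕ} (r : Fin 3) (i : ℕ) (hi : i ≤ n) :
    ∑ w : SRVert 3 n, (if w.1 r = i then (1:ℝ) else 0) = ((n:ℝ) + 1 - i) := by
  have hrs : r + 1 ≠ r := by fin_cases r <;> decide
  have key : ∀ w : SRVert 3 n, (if w.1 r = i then (1:ℝ) else 0)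
      = ∑ t ∈ Finset.range (n+1),
          (if w.1 (r+1) = t then (if w.1 r = i then (1:ℝ) else 0) else 0) := by
    intro w
    rw [Finset.sum_ite_eq (Finset.range (n+1)) (w.1 (r+1))
      (fun _ => if w.1 r = i then (1:ℝ) else 0),
      if_pos (Finset.mem_range.2 (Nat.lt_succ_of_le (vle w (r+1))))]
  rw [Finset.sum_congr rfl fun w _ => key w, Finset.sum_comm]
  rw [Finset.sum_congr rfl fun t _ => pairSum (r+1) r hrs t i]
  rw [Finset.sum_boole]
  have hfil : (Finset.range (n+1)).filter (fun t => t + i ≤ n) = Finset.range (n+1-i) := by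
    ext t; simp only [Finset.mem_filter, Finset.mem_range]; omega
  rw [hfil, Finset.card_range]
  rw [Nat.cast_sub (by omega)]
  push_cast; ring

lemma diagSum {n : ℕ} (l : Fin 3) (c i : ℕ) (hc : c ≤ n) :
    ∑ w : SRVert 3 n, (if w.1 l = c then (if w.1 l = i then (1:ℝ) else 0) else 0)
      = if c = i then ((n:ℝ) + 1 - i) else 0 := by
  by_cases h : c = i
  · subst h
    rw [if_pos rfl, ← lineSum l c hc]
    apply Finset.sum_congr rfl
    intro w _
    by_cases hw : w.1 l = c <;> simp [hw]
  · rw [if_neg h]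
    apply Finset.sum_eq_zero
    intro w _
    by_cases hw : w.1 l = c
    · rw [if_pos hw, hw, if_neg h]
    · rw [if_neg hw]

lemma AX {n : ℕ} (i : ℕ) (hi : i ≤ n) (v : SRVert 3 n) :
    ((SR 3 n).adjMatrix ℝ).mulVec (Xv n i) v =
      (if v.1 1 + i ≤ n then 1 else 0) + (if v.1 2 + i ≤ n then 1 else 0)
        + (if v.1 0 = i then (n:ℝ) - i - 2 else 0) := by
  have hX : Xv n i = fun w : SRVert 3 n => if w.1 0 = i then (1:ℝ) else 0 := rfl
  rw [hX, mulVec_eq, pairSum 1 0 (by decide) (v.1 1) i, pairSum 2 0 (by decide) (v.1 2) i,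
    diagSum 0 (v.1 0) i (vle v 0)]
  by_cases h : v.1 0 = i <;> simp [h] <;> ring

lemma AY {n : ℕ} (i : ℕ) (hi : i ≤ n) (v : SRVert 3 n) :
    ((SR 3 n).adjMatrix ℝ).mulVec (Yv n i) v =
      (if v.1 0 + i ≤ n then 1 else 0) + (if v.1 2 + i ≤ n then 1 else 0)
        + (if v.1 1 = i then (n:ℝ) - i - 2 else 0) := by
  have hY : Yv n i = fun w : SRVert 3 n => if w.1 1 = i then (1:ℝ) else 0 := rfl
  rw [hY, mulVec_eq, pairSum 0 1 (by decide) (v.1 0) i, pairSum 2 1 (by decide) (v.1 2) i,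
    diagSum 1 (v.1 1) i (vle v 1)]
  by_cases h : v.1 1 = i <;> simp [h] <;> ring

lemma AZ {n : ℕ} (i : ℕ) (hi : i ≤ n) (v : SRVert 3 n) :
    ((SR 3 n).adjMatrix ℝ).mulVec (Zv n i) v =
      (if v.1 0 + i ≤ n then 1 else 0) + (if v.1 1 + i ≤ n then 1 else 0)
        + (if v.1 2 = i then (n:ℝ) - i - 2 else 0) := by
  have hZ : Zv n i = fun w : SRVert 3 n => if w.1 2 = i then (1:ℝ) else 0 := rfl
  rw [hZ, mulVec_eq, pairSum 0 2 (by decide) (v.1 0) i, pairSum 1 2 (by decide) (v.1 1) i,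
    diagSum 2 (v.1 2) i (vle v 2)]
  by_cases h : v.1 2 = i <;> simp [h] <;> ring

lemma sum_if_le {n : ℕ} (x p q : ℕ) (hx : x ≤ n) (h : ℕ → ℝ) :
    ∑ i ∈ Finset.Icc p q, (if x + i ≤ n then h i else 0)
      = ∑ i ∈ Finset.Icc p (min q (n - x)), h i := by
  rw [← Finset.sum_filter]
  congr 1
  ext j
  simp only [Finset.mem_filter, Finset.mem_Icc, le_min_iff]
  omega

lemma sum_lin (A B : ℝ) (p : ℕ) : ∀ q : ℕ, (∑ i ∈ Finset.Icc p q, (A * (i:ℝ) + B))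
    = if p ≤ q then ((q:ℝ) - p + 1) * (A * ((p:ℝ) + q) / 2 + B) else 0
  | 0 => by
    by_cases hp : p = 0
    · subst hp
      rw [Finset.Icc_self, Finset.sum_singleton, if_pos le_rfl]
      norm_num
    · rw [Finset.Icc_eq_empty (by omega), if_neg (by omega), Finset.sum_empty]
  | (q+1) => by
    by_cases hpq : p ≤ q + 1
    · have hins : Finset.Icc p (q+1) = insert (q+1) (Finset.Icc p q) := by
        ext j; simp only [Finset.mem_Icc, Finset.mem_insert]; omega
      rw [hins, Finset.sum_insert (by simp), sum_lin A B p q]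
      by_cases hpq2 : p ≤ q
      · rw [if_pos hpq2, if_pos hpq]; push_cast; ring
      · have hp : p = q + 1 := by omega
        subst hp
        rw [if_neg (by omega), if_pos le_rfl]; push_cast; ring
    · rw [Finset.Icc_eq_empty (by omega), if_neg hpq, Finset.sum_empty]

lemma cast_sub_real {a b : ℕ} (h : b ≤ a) : ((a - b : ℕ) : ℝ) = (a:ℝ) - b := by
  have := congrArg (Nat.cast (R := ℝ)) (show (a - b) + b = a by omega)
  push_cast at this; linarith

lemma Fcoord {n k : ℕ} (hk : 2*k+3 ≤ n) (x : ℕ) (hx : x ≤ n) :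
    (-(((n:ℝ)-2*k-1) * ((n:ℝ)-2*k-2))) * (if x + (n-k) ≤ n then (1:ℝ) else 0)
    + (∑ i ∈ Finset.Icc (k+1) (n-k-1), (2*((i:ℝ)-k-1)) * (if x + i ≤ n then (1:ℝ) else 0))
    + (∑ i ∈ Finset.Icc (k+1) (n-k-1), (2*(i:ℝ)-n) * (if x + i ≤ n then (1:ℝ) else 0))
    + (∑ i ∈ Finset.Icc (k+1) (n-k-1), (if x = i then (2*(i:ℝ)-n) * ((n:ℝ)-i-2) else 0))
    = ((k:ℝ)-2) * (if x ∈ Finset.Icc (k+1) (n-k-1) then 2*(x:ℝ)-(n:ℝ) else 0) := by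
  have e1 : ∀ i : ℕ, (2*((i:ℝ)-k-1)) * (if x + i ≤ n then (1:ℝ) else 0)
      = if x + i ≤ n then (2*(i:ℝ) + (-2*(k:ℝ)-2)) else 0 := by
    intro i; by_cases h : x + i ≤ n <;> simp [h] <;> ring
  have e2 : ∀ i : ℕ, (2*(i:ℝ)-n) * (if x + i ≤ n then (1:ℝ) else 0)
      = if x + i ≤ n then (2*(i:ℝ) + (-(n:ℝ))) else 0 := by
    intro i; by_cases h : x + i ≤ n <;> simp [h] <;> ring
  rw [Finset.sum_congr rfl fun i _ => e1 i, Finset.sum_congr rfl fun i _ => e2 i,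
    sum_if_le x _ _ hx, sum_if_le x _ _ hx,
    Finset.sum_ite_eq (Finset.Icc (k+1) (n-k-1)) x (fun i => (2*(i:ℝ)-n) * ((n:ℝ)-i-2)),
    sum_lin, sum_lin]
  have hkn : k ≤ n := by omega
  rcases (show x ≤ k ∨ (k+1 ≤ x ∧ x ≤ n-k-1) ∨ n-k ≤ x by omega) with hz | hz | hz
  · have hmin : min (n-k-1) (n-x) = n-k-1 := by omega
    rw [hmin, if_pos (by omega : x + (n-k) ≤ n), if_pos (by omega : k+1 ≤ n-k-1),
      if_pos (by omega : k+1 ≤ n-k-1),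
      if_neg (by simp only [Finset.mem_Icc]; omega),
      if_neg (by simp only [Finset.mem_Icc]; omega),
      cast_sub_real (by omega : 1 ≤ n - k), cast_sub_real (by omega : k ≤ n)]
    push_cast; ring
  · have hmin : min (n-k-1) (n-x) = n-x := by omega
    rw [hmin, if_neg (by omega : ¬ (x + (n-k) ≤ n)), if_pos (by omega : k+1 ≤ n-x),
      if_pos (by omega : k+1 ≤ n-x),
      if_pos (by simp only [Finset.mem_Icc]; omega),
      if_pos (by simp only [Finset.mem_Icc]; omega),
      cast_sub_real (by omega : x ≤ n)]
    push_cast; ring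
  · have hmin : min (n-k-1) (n-x) = n-x := by omega
    rw [hmin, if_neg (by omega : ¬ (x + (n-k) ≤ n)), if_neg (by omega : ¬ k+1 ≤ n-x),
      if_neg (by omega : ¬ k+1 ≤ n-x),
      if_neg (by simp only [Finset.mem_Icc]; omega),
      if_neg (by simp only [Finset.mem_Icc]; omega)]
    ring

lemma Gcoord {n k : ℕ} (hk : 2*k+3 ≤ n) (c : ℕ) (hc : c ≤ n) :
    2 * (∑ i ∈ Finset.Icc (k+1) (n-k-1), (2*(i:ℝ)-n) * (if c + i ≤ n then (1:ℝ) else 0))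
    + (∑ i ∈ Finset.Icc (k+1) (n-k-1), (if c = i then (2*((i:ℝ)-k-1)) * ((n:ℝ)-i-2) else 0))
    = ((k:ℝ)-2) * (if c ∈ Finset.Icc (k+1) (n-k-1) then 2*((c:ℝ)-k-1) else 0) := by
  have e2 : ∀ i : ℕ, (2*(i:ℝ)-n) * (if c + i ≤ n then (1:ℝ) else 0)
      = if c + i ≤ n then (2*(i:ℝ) + (-(n:ℝ))) else 0 := by
    intro i; by_cases h : c + i ≤ n <;> simp [h] <;> ring
  rw [Finset.sum_congr rfl fun i _ => e2 i, sum_if_le c _ _ hc,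
    Finset.sum_ite_eq (Finset.Icc (k+1) (n-k-1)) c (fun i => (2*((i:ℝ)-k-1)) * ((n:ℝ)-i-2)),
    sum_lin]
  rcases (show c ≤ k ∨ (k+1 ≤ c ∧ c ≤ n-k-1) ∨ n-k ≤ c by omega) with hz | hz | hz
  · have hmin : min (n-k-1) (n-c) = n-k-1 := by omega
    rw [hmin, if_pos (by omega : k+1 ≤ n-k-1),
      if_neg (by simp only [Finset.mem_Icc]; omega),
      if_neg (by simp only [Finset.mem_Icc]; omega),
      cast_sub_real (by omega : 1 ≤ n - k), cast_sub_real (by omega : k ≤ n)]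
    push_cast; ring
  · have hmin : min (n-k-1) (n-c) = n-c := by omega
    rw [hmin, if_pos (by omega : k+1 ≤ n-c),
      if_pos (by simp only [Finset.mem_Icc]; omega),
      if_pos (by simp only [Finset.mem_Icc]; omega),
      cast_sub_real (by omega : c ≤ n)]
    push_cast; ring
  · have hmin : min (n-k-1) (n-c) = n-c := by omega
    rw [hmin, if_neg (by omega : ¬ k+1 ≤ n-c),
      if_neg (by simp only [Finset.mem_Icc]; omega),
      if_neg (by simp only [Finset.mem_Icc]; omega)]
    ring


/-- for `0 ≤ k ≤ ⌊(n-3)/2⌋`, the vector `P_k` is a nonzero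
eigenvector of the adjacency matrix of `SR(3,n)` with eigenvalue `k - 2`. -/
theorem P_eigenvector (n k : ℕ) (hk : 2 * k + 3 ≤ n) :
    (-(((n : ℝ) - 2*k - 1) * ((n : ℝ) - 2*k - 2))) • Zv n (n - k)
        + ∑ i ∈ Finset.Icc (k+1) (n-k-1),
            ((2 * ((i : ℝ) - k - 1)) • Zv n i + (2*(i : ℝ) - n) • (Xv n i + Yv n i)) ≠ 0 ∧
    ((SR 3 n).adjMatrix ℝ).mulVec
        ((-(((n : ℝ) - 2*k - 1) * ((n : ℝ) - 2*k - 2))) • Zv n (n - k)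
          + ∑ i ∈ Finset.Icc (k+1) (n-k-1),
              ((2 * ((i : ℝ) - k - 1)) • Zv n i + (2*(i : ℝ) - n) • (Xv n i + Yv n i)))
      = ((k : ℝ) - 2) •
        ((-(((n : ℝ) - 2*k - 1) * ((n : ℝ) - 2*k - 2))) • Zv n (n - k)
          + ∑ i ∈ Finset.Icc (k+1) (n-k-1),
              ((2 * ((i : ℝ) - k - 1)) • Zv n i + (2*(i : ℝ) - n) • (Xv n i + Yv n i))) := by
  have hkn : k ≤ n := by omega
  constructor
  · -- nonzero
    intro h
    have hv0 : ∑ j, (![0, k, n - k] : Fin 3 → ℕ) j = n := by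
      rw [Fin.sum_univ_three]; simp; omega
    set v₀ : SRVert 3 n := ⟨![0, k, n-k], hv0⟩ with hv₀
    have hh := congrFun h v₀
    have hZ0 : Zv n (n-k) v₀ = 1 := by
      simp [Zv, hv₀]
    have hsum0 : ∀ i ∈ Finset.Icc (k+1) (n-k-1),
        ((2 * ((i : ℝ) - k - 1)) • Zv n i + (2*(i : ℝ) - n) • (Xv n i + Yv n i)) v₀ = 0 := by
      intro i hi
      rw [Finset.mem_Icc] at hi
      have hZ : Zv n i v₀ = 0 := by
        simp only [Zv, hv₀]
        rw [if_neg (by show ¬ (![0, k, n-k] : Fin 3 → ℕ) 2 = i; simp; omega)]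
      have hX : Xv n i v₀ = 0 := by
        simp only [Xv, hv₀]
        rw [if_neg (by show ¬ (![0, k, n-k] : Fin 3 → ℕ) 0 = i; simp; omega)]
      have hY : Yv n i v₀ = 0 := by
        simp only [Yv, hv₀]
        rw [if_neg (by show ¬ (![0, k, n-k] : Fin 3 → ℕ) 1 = i; simp; omega)]
      simp [hX, hY, hZ]
    rw [Pi.add_apply, Pi.zero_apply, Finset.sum_apply,
      Finset.sum_eq_zero hsum0, Pi.smul_apply, hZ0] at hh
    have hn3 : (2*(k:ℝ) + 3) ≤ n := by exact_mod_cast hk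
    simp only [smul_eq_mul, mul_one, add_zero] at hh
    nlinarith [hh]
  · -- eigenvector equation
    set M := (SR 3 n).adjMatrix ℝ with hM
    set F : ℕ → SRVert 3 n → ℝ := fun i =>
      (2 * ((i : ℝ) - k - 1)) • Zv n i + (2*(i : ℝ) - n) • (Xv n i + Yv n i) with hF
    have hmsum : M.mulVec (∑ i ∈ Finset.Icc (k+1) (n-k-1), F i)
        = ∑ i ∈ Finset.Icc (k+1) (n-k-1), M.mulVec (F i) := by
      simpa only [Matrix.mulVecLin_apply] using
        map_sum M.mulVecLin F (Finset.Icc (k+1) (n-k-1))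
    funext v
    have ha := vle v 0; have hb := vle v 1; have hc := vle v 2
    rw [Matrix.mulVec_add, Matrix.mulVec_smul, hmsum]
    rw [Pi.add_apply, Pi.smul_apply, Finset.sum_apply]
    have hFmul : ∀ i ∈ Finset.Icc (k+1) (n-k-1), M.mulVec (F i) v =
        (2 * ((i : ℝ) - k - 1)) * (M.mulVec (Zv n i) v)
          + (2*(i : ℝ) - n) * (M.mulVec (Xv n i) v + M.mulVec (Yv n i) v) := by
      intro i hi
      rw [hF]
      simp only [Matrix.mulVec_add, Matrix.mulVec_smul, Pi.add_apply, Pi.smul_apply,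
        smul_eq_mul]
    rw [Finset.sum_congr rfl hFmul]
    -- rewrite generator actions
    have hAZnk := AZ (n-k) (by omega) v
    have hgen : ∀ i ∈ Finset.Icc (k+1) (n-k-1),
        (2 * ((i : ℝ) - k - 1)) * (M.mulVec (Zv n i) v)
          + (2*(i : ℝ) - n) * (M.mulVec (Xv n i) v + M.mulVec (Yv n i) v)
        = (2*((i:ℝ)-k-1)) * (if v.1 0 + i ≤ n then (1:ℝ) else 0)
          + (2*((i:ℝ)-k-1)) * (if v.1 1 + i ≤ n then (1:ℝ) else 0)
          + (if v.1 2 = i then (2*((i:ℝ)-k-1)) * ((n:ℝ)-i-2) else 0)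
          + ((2*(i:ℝ)-n) * (if v.1 0 + i ≤ n then (1:ℝ) else 0)
          + (2*(i:ℝ)-n) * (if v.1 1 + i ≤ n then (1:ℝ) else 0)
          + ((2*(i:ℝ)-n) * (if v.1 2 + i ≤ n then (1:ℝ) else 0)
          + (2*(i:ℝ)-n) * (if v.1 2 + i ≤ n then (1:ℝ) else 0)
          + ((if v.1 0 = i then (2*(i:ℝ)-n) * ((n:ℝ)-i-2) else 0)
          + (if v.1 1 = i then (2*(i:ℝ)-n) * ((n:ℝ)-i-2) else 0)))) := by
      intro i hi
      rw [Finset.mem_Icc] at hi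
      rw [AZ i (by omega) v, AX i (by omega) v, AY i (by omega) v]
      by_cases h0 : v.1 0 = i <;> by_cases h1 : v.1 1 = i <;> by_cases h2 : v.1 2 = i <;>
        simp only [h0, h1, h2, if_pos, if_neg, if_true, if_false] <;> ring
    rw [Finset.sum_congr rfl hgen, hAZnk]
    simp only [Finset.sum_add_distrib]
    -- right-hand side
    rw [Pi.smul_apply, Pi.add_apply, Pi.smul_apply, Finset.sum_apply]
    have hrhs : ∀ i ∈ Finset.Icc (k+1) (n-k-1),
        ((2 * ((i : ℝ) - k - 1)) • Zv n i + (2*(i : ℝ) - n) • (Xv n i + Yv n i)) v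
        = (if v.1 2 = i then 2*((i:ℝ)-k-1) else 0)
          + ((if v.1 0 = i then 2*(i:ℝ)-(n:ℝ) else 0)
            + (if v.1 1 = i then 2*(i:ℝ)-(n:ℝ) else 0)) := by
      intro i hi
      simp only [Pi.add_apply, Pi.smul_apply, smul_eq_mul, Xv, Yv, Zv]
      by_cases h0 : v.1 0 = i <;> by_cases h1 : v.1 1 = i <;> by_cases h2 : v.1 2 = i <;>
        simp only [h0, h1, h2, if_pos, if_neg, if_true, if_false] <;> ring
    rw [Finset.sum_congr rfl hrhs]
    simp only [Finset.sum_add_distrib]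
    rw [Finset.sum_ite_eq (Finset.Icc (k+1) (n-k-1)) (v.1 2) (fun i => 2*((i:ℝ)-k-1)),
      Finset.sum_ite_eq (Finset.Icc (k+1) (n-k-1)) (v.1 0) (fun i => 2*(i:ℝ)-(n:ℝ)),
      Finset.sum_ite_eq (Finset.Icc (k+1) (n-k-1)) (v.1 1) (fun i => 2*(i:ℝ)-(n:ℝ))]
    -- Zv (n-k) v on the RHS
    have hZnk : Zv n (n-k) v = (if v.1 2 = n-k then (1:ℝ) else 0) := rfl
    have hdiag : (if v.1 2 = n-k then (n:ℝ)-((n-k:ℕ):ℝ)-2 else 0)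
        = ((k:ℝ)-2) * (if v.1 2 = n-k then (1:ℝ) else 0) := by
      rw [cast_sub_real hkn]
      by_cases h : v.1 2 = n-k <;> simp [h] <;> ring
    rw [hZnk, hdiag]
    have hFa := Fcoord hk (v.1 0) ha
    have hFb := Fcoord hk (v.1 1) hb
    have hGc := Gcoord hk (v.1 2) hc
    simp only [smul_eq_mul]
    linear_combination hFa + hFb + hGc
end

section
/- For every integer k with 0 <= k <= floor((n-2)/2), the vector Q_k = (n-2k+1)(n-2k+2) Z_k + sum_{j=k}^{n-k} [(2j-n)(X_j + Y_j) - 2(n-j-k+1) Z_j] is a nonzero eigenvector of the adjacency matrix of SR(3,n) with eigenvalue n-k-2. -/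
open Finset



lemma fin3_cases : ∀ m l : Fin 3, l = m ∨ l = m + 1 ∨ l = m + 2 := by decide

lemma fin3_ne : ∀ m : Fin 3, m + 1 ≠ m ∧ m + 2 ≠ m ∧ m + 2 ≠ m + 1 := by decide

lemma sum_fin3 {M : Type*} [AddCommMonoid M] (m : Fin 3) (f : Fin 3 → M) :
    ∑ l, f l = f m + f (m+1) + f (m+2) := by
  fin_cases m <;> simp [Fin.sum_univ_three] <;> abel

lemma coords_sum {n : ℕ} (w : SRVert 3 n) (m : Fin 3) :
    w.1 m + w.1 (m+1) + w.1 (m+2) = n := by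
  have h := w.2
  rw [sum_fin3 m] at h
  exact h

lemma srvert_ext {n : ℕ} (m : Fin 3) (y z : SRVert 3 n)
    (h1 : y.1 m = z.1 m) (h2 : y.1 (m+1) = z.1 (m+1)) : y = z := by
  have hy := coords_sum y m
  have hz := coords_sum z m
  refine Subtype.ext (funext fun l => ?_)
  rcases fin3_cases m l with h | h | h <;> subst h <;> omega

/-- build a vertex with value p at m, q at m+1, r at m+2 -/
def mkv {n : ℕ} (m : Fin 3) (p q r : ℕ) (h : p + q + r = n) : SRVert 3 n :=
  ⟨fun l => if l = m then p else if l = m+1 then q else r, by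
    rw [sum_fin3 m]
    obtain ⟨h1, h2, h3⟩ := fin3_ne m
    simp [h1, h2, h3, h]⟩

lemma mkv_m {n : ℕ} (m : Fin 3) (p q r : ℕ) (h : p + q + r = n) :
    (mkv m p q r h).1 m = p := by simp [mkv]

lemma mkv_m1 {n : ℕ} (m : Fin 3) (p q r : ℕ) (h : p + q + r = n) :
    (mkv m p q r h).1 (m+1) = q := by
  obtain ⟨h1, _, _⟩ := fin3_ne m
  simp [mkv, h1]

lemma mkv_m2 {n : ℕ} (m : Fin 3) (p q r : ℕ) (h : p + q + r = n) :
    (mkv m p q r h).1 (m+2) = r := by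
  obtain ⟨_, h2, h3⟩ := fin3_ne m
  simp [mkv, h2, h3]

lemma adj_iff {n : ℕ} (w y : SRVert 3 n) :
    (SR 3 n).Adj w y ↔ y ≠ w ∧ ∃ l, w.1 l = y.1 l := by
  show (Finset.univ.filter fun i => w.1 i ≠ y.1 i).card = 2 ↔ _
  rw [Finset.card_filter, Fin.sum_univ_three]
  have hw := coords_sum w 0
  have hy := coords_sum y 0
  have e1 : (0 : Fin 3) + 1 = 1 := rfl
  have e2 : (0 : Fin 3) + 2 = 2 := rfl
  rw [e1, e2] at hw hy
  have hne : y ≠ w ↔ ¬ (w.1 0 = y.1 0 ∧ w.1 1 = y.1 1 ∧ w.1 2 = y.1 2) := by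
    constructor
    · intro h hc
      exact h (srvert_ext 0 y w hc.1.symm (by rw [e1]; exact hc.2.1.symm))
    · intro h hc
      subst hc
      exact h ⟨rfl, rfl, rfl⟩
  rw [hne]
  constructor
  · intro h
    constructor
    · by_cases h0 : w.1 0 = y.1 0 <;> by_cases h1 : w.1 1 = y.1 1 <;>
        by_cases h2 : w.1 2 = y.1 2 <;> simp [h0, h1, h2] at h ⊢ <;> omega
    · by_cases h0 : w.1 0 = y.1 0 <;> by_cases h1 : w.1 1 = y.1 1 <;>
        by_cases h2 : w.1 2 = y.1 2 <;> simp [h0, h1, h2] at h <;>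
        first
          | exact ⟨0, by assumption⟩
          | exact ⟨1, by assumption⟩
          | exact ⟨2, by assumption⟩
          | omega
  · rintro ⟨hy2, l, hl⟩
    have hor : w.1 0 = y.1 0 ∨ w.1 1 = y.1 1 ∨ w.1 2 = y.1 2 := by
      rcases fin3_cases 0 l with rfl | rfl | rfl
      · exact Or.inl hl
      · exact Or.inr (Or.inl hl)
      · exact Or.inr (Or.inr hl)
    by_cases h0 : w.1 0 = y.1 0 <;> by_cases h1 : w.1 1 = y.1 1 <;>
      by_cases h2 : w.1 2 = y.1 2 <;> simp [h0, h1, h2] <;>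
      first | tauto | omega

lemma card_line {n : ℕ} (m : Fin 3) (i : ℕ) (hi : i ≤ n) :
    (Finset.univ.filter fun y : SRVert 3 n => y.1 m = i).card = n - i + 1 := by
  rw [← Finset.card_range (n - i + 1)]
  apply Finset.card_bij' (fun y _ => y.1 (m+1))
    (fun t ht => mkv m i t (n - i - t) (by rw [Finset.mem_range] at ht; omega))
  · intro y hy
    rw [Finset.mem_filter] at hy
    exact srvert_ext m _ y (mkv_m _ _ _ _ _ |>.trans hy.2.symm) (mkv_m1 _ _ _ _ _)
  · intro t ht
    exact mkv_m1 _ _ _ _ _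
  · intro y hy
    rw [Finset.mem_filter] at hy
    have := coords_sum y m
    rw [Finset.mem_range]
    omega
  · intro t ht
    rw [Finset.mem_filter]
    exact ⟨Finset.mem_univ _, mkv_m _ _ _ _ _⟩

lemma mem_filter_adj {n : ℕ} (m : Fin 3) (i : ℕ) (w y : SRVert 3 n) (hw : w.1 m ≠ i) :
    (y ∈ ((SR 3 n).neighborFinset w).filter (fun y => y.1 m = i)) ↔
      (y.1 m = i ∧ (y.1 (m+1) = w.1 (m+1) ∨ y.1 (m+2) = w.1 (m+2))) := by
  rw [Finset.mem_filter, SimpleGraph.mem_neighborFinset, adj_iff]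
  constructor
  · rintro ⟨⟨hne, l, hl⟩, hm⟩
    refine ⟨hm, ?_⟩
    rcases fin3_cases m l with rfl | rfl | rfl
    · exact absurd (hl.trans hm) hw
    · exact Or.inl hl.symm
    · exact Or.inr hl.symm
  · rintro ⟨hm, h | h⟩
    · exact ⟨⟨fun hc => hw (hc ▸ hm), ⟨m+1, h.symm⟩⟩, hm⟩
    · exact ⟨⟨fun hc => hw (hc ▸ hm), ⟨m+2, h.symm⟩⟩, hm⟩

lemma count_line {n : ℕ} (m : Fin 3) (i : ℕ) (hi : i ≤ n) (w : SRVert 3 n) :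
    (∑ y ∈ (SR 3 n).neighborFinset w, (if y.1 m = i then (1:ℝ) else 0))
    = ((n:ℝ) - i - 2) * (if w.1 m = i then 1 else 0)
      + (if w.1 (m+1) + i ≤ n then 1 else 0)
      + (if w.1 (m+2) + i ≤ n then 1 else 0) := by
  rw [Finset.sum_boole]
  have hws := coords_sum w m
  by_cases hw : w.1 m = i
  · -- the filtered set is the line minus w
    have hset : ((SR 3 n).neighborFinset w).filter (fun y => y.1 m = i)
        = (Finset.univ.filter fun y : SRVert 3 n => y.1 m = i).erase w := by
      ext y
      rw [Finset.mem_erase, Finset.mem_filter, Finset.mem_filter,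
        SimpleGraph.mem_neighborFinset, adj_iff]
      constructor
      · rintro ⟨⟨hne, _⟩, hm⟩
        exact ⟨hne, Finset.mem_univ _, hm⟩
      · rintro ⟨hne, _, hm⟩
        exact ⟨⟨hne, ⟨m, hw.trans hm.symm⟩⟩, hm⟩
    rw [hset, Finset.card_erase_of_mem (by rw [Finset.mem_filter]; exact ⟨Finset.mem_univ _, hw⟩),
      card_line m i hi]
    have c1 : w.1 (m+1) + i ≤ n := by omega
    have c2 : w.1 (m+2) + i ≤ n := by omega
    rw [if_pos hw, if_pos c1, if_pos c2]
    have : n - i + 1 - 1 = n - i := by omega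
    rw [this]
    push_cast [Nat.cast_sub hi]
    ring
  · rw [if_neg hw]
    by_cases c1 : w.1 (m+1) + i ≤ n <;> by_cases c2 : w.1 (m+2) + i ≤ n
    · have hset : ((SR 3 n).neighborFinset w).filter (fun y => y.1 m = i)
          = {mkv m i (w.1 (m+1)) (n - i - w.1 (m+1)) (by omega),
             mkv m i (n - i - w.1 (m+2)) (w.1 (m+2)) (by omega)} := by
        ext y
        rw [mem_filter_adj m i w y hw, Finset.mem_insert, Finset.mem_singleton]
        have hys := coords_sum y m
        constructor
        · rintro ⟨hm, h | h⟩
          · exact Or.inl (srvert_ext m y _ (by rw [mkv_m]; exact hm) (by rw [mkv_m1]; exact h))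
          · refine Or.inr (srvert_ext m y _ (by rw [mkv_m]; exact hm) (by rw [mkv_m1]; omega))
        · rintro (rfl | rfl)
          · exact ⟨mkv_m _ _ _ _ _, Or.inl (mkv_m1 _ _ _ _ _)⟩
          · exact ⟨mkv_m _ _ _ _ _, Or.inr (mkv_m2 _ _ _ _ _)⟩
      rw [hset, if_pos c1, if_pos c2]
      rw [Finset.card_insert_of_notMem, Finset.card_singleton]
      · norm_num
      · rw [Finset.mem_singleton]
        intro hc
        have h1 := congrArg (fun z : SRVert 3 n => z.1 (m+1)) hc
        simp only [mkv_m1] at h1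
        omega
    · have hset : ((SR 3 n).neighborFinset w).filter (fun y => y.1 m = i)
          = {mkv m i (w.1 (m+1)) (n - i - w.1 (m+1)) (by omega)} := by
        ext y
        rw [mem_filter_adj m i w y hw, Finset.mem_singleton]
        have hys := coords_sum y m
        constructor
        · rintro ⟨hm, h | h⟩
          · exact srvert_ext m y _ (by rw [mkv_m]; exact hm) (by rw [mkv_m1]; exact h)
          · omega
        · rintro rfl
          exact ⟨mkv_m _ _ _ _ _, Or.inl (mkv_m1 _ _ _ _ _)⟩
      rw [hset, if_pos c1, if_neg c2, Finset.card_singleton]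
      norm_num
    · have hset : ((SR 3 n).neighborFinset w).filter (fun y => y.1 m = i)
          = {mkv m i (n - i - w.1 (m+2)) (w.1 (m+2)) (by omega)} := by
        ext y
        rw [mem_filter_adj m i w y hw, Finset.mem_singleton]
        have hys := coords_sum y m
        constructor
        · rintro ⟨hm, h | h⟩
          · omega
          · exact srvert_ext m y _ (by rw [mkv_m]; exact hm) (by rw [mkv_m1]; omega)
        · rintro rfl
          exact ⟨mkv_m _ _ _ _ _, Or.inr (mkv_m2 _ _ _ _ _)⟩
      rw [hset, if_neg c1, if_pos c2, Finset.card_singleton]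
      norm_num
    · have hset : ((SR 3 n).neighborFinset w).filter (fun y => y.1 m = i) = ∅ := by
        ext y
        rw [mem_filter_adj m i w y hw]
        have hys := coords_sum y m
        simp only [Finset.notMem_empty, iff_false]
        rintro ⟨hm, h | h⟩ <;> omega
      rw [hset, if_neg c1, if_neg c2, Finset.card_empty]
      norm_num

lemma cast_card_Icc (a b : ℕ) (h : a ≤ b + 1) :
    (((Finset.Icc a b).card : ℕ) : ℝ) = (b:ℝ) + 1 - a := by
  rw [Nat.card_Icc, Nat.cast_sub h]
  push_cast
  ring

lemma sum_Icc_id (a b : ℕ) (h : a ≤ b + 1) :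
    ∑ j ∈ Finset.Icc a b, (j:ℝ) = ((b:ℝ)+1-(a:ℝ))*((a:ℝ)+(b:ℝ))/2 := by
  induction b with
  | zero => interval_cases a <;> simp
  | succ b ih =>
    by_cases ha : a ≤ b + 1
    · rw [Finset.sum_Icc_succ_top ha, ih ha]
      push_cast
      ring
    · have hab : a = b + 2 := by omega
      subst hab
      rw [Finset.Icc_eq_empty (by omega), Finset.sum_empty]
      push_cast
      ring

lemma sum_linear (α β : ℝ) (a b : ℕ) (h : a ≤ b + 1) :
    ∑ j ∈ Finset.Icc a b, (α * (j:ℝ) + β)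
      = α * (((b:ℝ)+1-(a:ℝ))*((a:ℝ)+(b:ℝ))/2) + β * ((b:ℝ)+1-(a:ℝ)) := by
  rw [Finset.sum_add_distrib, ← Finset.mul_sum, sum_Icc_id a b h, Finset.sum_const,
    nsmul_eq_mul, cast_card_Icc a b h]
  ring

lemma keyF (n k t : ℕ) (hk : 2*k+2 ≤ n) :
    ((n:ℝ)-2*k+1)*((n:ℝ)-2*k+2) * (if t + k ≤ n then (1:ℝ) else 0)
      + ∑ j ∈ Finset.Icc k (n-k),
        ((2*(j:ℝ)-(n:ℝ)) * ((k:ℝ)-(j:ℝ)) * (if t = j then (1:ℝ) else 0)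
          + (4*(j:ℝ) + (2*(k:ℝ) - 3*(n:ℝ) - 2)) * (if t + j ≤ n then (1:ℝ) else 0)) = 0 := by
  rw [Finset.sum_add_distrib]
  have h1 : ∑ j ∈ Finset.Icc k (n-k), (2*(j:ℝ)-(n:ℝ))*((k:ℝ)-(j:ℝ)) * (if t = j then (1:ℝ) else 0)
      = if t ∈ Finset.Icc k (n-k) then (2*(t:ℝ)-(n:ℝ))*((k:ℝ)-(t:ℝ)) else 0 := by
    rw [← Finset.sum_ite_eq (Finset.Icc k (n-k)) t (fun j => (2*(j:ℝ)-(n:ℝ))*((k:ℝ)-(j:ℝ)))]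
    exact Finset.sum_congr rfl fun j _ => by split <;> simp_all
  have h2 : ∑ j ∈ Finset.Icc k (n-k), (4*(j:ℝ) + (2*(k:ℝ) - 3*(n:ℝ) - 2)) * (if t + j ≤ n then (1:ℝ) else 0)
      = ∑ j ∈ (Finset.Icc k (n-k)).filter (fun j => t + j ≤ n), (4*(j:ℝ) + (2*(k:ℝ) - 3*(n:ℝ) - 2)) := by
    rw [Finset.sum_filter]
    exact Finset.sum_congr rfl fun j _ => by split <;> ring
  rw [h1, h2]
  by_cases ht1 : t ≤ n - k
  · by_cases ht2 : k ≤ t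
    · have hf : (Finset.Icc k (n-k)).filter (fun j => t + j ≤ n) = Finset.Icc k (n-t) := by
        ext j
        simp only [Finset.mem_filter, Finset.mem_Icc]
        omega
      rw [hf, if_pos (Finset.mem_Icc.2 ⟨ht2, ht1⟩), if_pos (by omega),
        sum_linear 4 (2*(k:ℝ) - 3*(n:ℝ) - 2) k (n-t) (by omega),
        Nat.cast_sub (by omega : t ≤ n)]
      ring
    · have hf : (Finset.Icc k (n-k)).filter (fun j => t + j ≤ n) = Finset.Icc k (n-k) := by
        ext j
        simp only [Finset.mem_filter, Finset.mem_Icc]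
        omega
      have hnm : t ∉ Finset.Icc k (n-k) := by
        rw [Finset.mem_Icc]
        omega
      rw [hf, if_neg hnm, if_pos (by omega : t + k ≤ n),
        sum_linear 4 (2*(k:ℝ) - 3*(n:ℝ) - 2) k (n-k) (by omega),
        Nat.cast_sub (by omega : k ≤ n)]
      ring
  · have hf : (Finset.Icc k (n-k)).filter (fun j => t + j ≤ n) = ∅ := by
      ext j
      simp only [Finset.mem_filter, Finset.mem_Icc, Finset.notMem_empty, iff_false, not_and]
      omega
    have hnm : t ∉ Finset.Icc k (n-k) := by
      rw [Finset.mem_Icc]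
      omega
    rw [hf, if_neg hnm, if_neg (by omega : ¬ (t + k ≤ n)), Finset.sum_empty]
    ring

lemma keyG (n k t : ℕ) (hk : 2*k+2 ≤ n) :
    ∑ j ∈ Finset.Icc k (n-k),
        (2*((j:ℝ)-(k:ℝ)) * ((n:ℝ)-(j:ℝ)-(k:ℝ)+1) * (if t = j then (1:ℝ) else 0)
          + (4*(j:ℝ) + (-2*(n:ℝ))) * (if t + j ≤ n then (1:ℝ) else 0)) = 0 := by
  rw [Finset.sum_add_distrib]
  have h1 : ∑ j ∈ Finset.Icc k (n-k), 2*((j:ℝ)-(k:ℝ))*((n:ℝ)-(j:ℝ)-(k:ℝ)+1) * (if t = j then (1:ℝ) else 0)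
      = if t ∈ Finset.Icc k (n-k) then 2*((t:ℝ)-(k:ℝ))*((n:ℝ)-(t:ℝ)-(k:ℝ)+1) else 0 := by
    rw [← Finset.sum_ite_eq (Finset.Icc k (n-k)) t (fun j => 2*((j:ℝ)-(k:ℝ))*((n:ℝ)-(j:ℝ)-(k:ℝ)+1))]
    exact Finset.sum_congr rfl fun j _ => by split <;> simp_all
  have h2 : ∑ j ∈ Finset.Icc k (n-k), (4*(j:ℝ) + (-2*(n:ℝ))) * (if t + j ≤ n then (1:ℝ) else 0)
      = ∑ j ∈ (Finset.Icc k (n-k)).filter (fun j => t + j ≤ n), (4*(j:ℝ) + (-2*(n:ℝ))) := by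
    rw [Finset.sum_filter]
    exact Finset.sum_congr rfl fun j _ => by split <;> ring
  rw [h1, h2]
  by_cases ht1 : t ≤ n - k
  · by_cases ht2 : k ≤ t
    · have hf : (Finset.Icc k (n-k)).filter (fun j => t + j ≤ n) = Finset.Icc k (n-t) := by
        ext j
        simp only [Finset.mem_filter, Finset.mem_Icc]
        omega
      rw [hf, if_pos (Finset.mem_Icc.2 ⟨ht2, ht1⟩),
        sum_linear 4 (-2*(n:ℝ)) k (n-t) (by omega),
        Nat.cast_sub (by omega : t ≤ n)]
      ring
    · have hf : (Finset.Icc k (n-k)).filter (fun j => t + j ≤ n) = Finset.Icc k (n-k) := by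
        ext j
        simp only [Finset.mem_filter, Finset.mem_Icc]
        omega
      have hnm : t ∉ Finset.Icc k (n-k) := by
        rw [Finset.mem_Icc]
        omega
      rw [hf, if_neg hnm,
        sum_linear 4 (-2*(n:ℝ)) k (n-k) (by omega),
        Nat.cast_sub (by omega : k ≤ n)]
      ring
  · have hf : (Finset.Icc k (n-k)).filter (fun j => t + j ≤ n) = ∅ := by
      ext j
      simp only [Finset.mem_filter, Finset.mem_Icc, Finset.notMem_empty, iff_false, not_and]
      omega
    have hnm : t ∉ Finset.Icc k (n-k) := by
      rw [Finset.mem_Icc]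
      omega
    rw [hf, if_neg hnm, Finset.sum_empty]
    ring

lemma countX (n i : ℕ) (hi : i ≤ n) (w : SRVert 3 n) :
    (∑ y ∈ (SR 3 n).neighborFinset w, (if y.1 0 = i then (1:ℝ) else 0))
    = ((n:ℝ) - i - 2) * (if w.1 0 = i then (1:ℝ) else 0)
      + (if w.1 1 + i ≤ n then (1:ℝ) else 0)
      + (if w.1 2 + i ≤ n then (1:ℝ) else 0) := by
  have h := count_line (n := n) 0 i hi w
  rw [show ((0:Fin 3)+1) = 1 from rfl, show ((0:Fin 3)+2) = 2 from rfl] at h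
  exact h

lemma countY (n i : ℕ) (hi : i ≤ n) (w : SRVert 3 n) :
    (∑ y ∈ (SR 3 n).neighborFinset w, (if y.1 1 = i then (1:ℝ) else 0))
    = ((n:ℝ) - i - 2) * (if w.1 1 = i then (1:ℝ) else 0)
      + (if w.1 2 + i ≤ n then (1:ℝ) else 0)
      + (if w.1 0 + i ≤ n then (1:ℝ) else 0) := by
  have h := count_line (n := n) 1 i hi w
  rw [show ((1:Fin 3)+1) = 2 from rfl, show ((1:Fin 3)+2) = 0 from rfl] at h
  exact h

lemma countZ (n i : ℕ) (hi : i ≤ n) (w : SRVert 3 n) :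
    (∑ y ∈ (SR 3 n).neighborFinset w, (if y.1 2 = i then (1:ℝ) else 0))
    = ((n:ℝ) - i - 2) * (if w.1 2 = i then (1:ℝ) else 0)
      + (if w.1 0 + i ≤ n then (1:ℝ) else 0)
      + (if w.1 1 + i ≤ n then (1:ℝ) else 0) := by
  have h := count_line (n := n) 2 i hi w
  rw [show ((2:Fin 3)+1) = 0 from rfl, show ((2:Fin 3)+2) = 1 from rfl] at h
  exact h

lemma Q_eigen_part (n k : ℕ) (hk : 2 * k + 2 ≤ n) :
    ((SR 3 n).adjMatrix ℝ).mulVec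
        ((((n : ℝ) - 2*k + 1) * ((n : ℝ) - 2*k + 2)) • Zv n k
          + ∑ j ∈ Finset.Icc k (n-k),
              ((2*(j : ℝ) - n) • (Xv n j + Yv n j)
                - (2 * ((n : ℝ) - j - k + 1)) • Zv n j))
      = ((n : ℝ) - k - 2) •
        ((((n : ℝ) - 2*k + 1) * ((n : ℝ) - 2*k + 2)) • Zv n k
          + ∑ j ∈ Finset.Icc k (n-k),
              ((2*(j : ℝ) - n) • (Xv n j + Yv n j)
                - (2 * ((n : ℝ) - j - k + 1)) • Zv n j)) := by
  funext w
  rw [SimpleGraph.adjMatrix_mulVec_apply]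
  simp only [Pi.add_apply, Pi.smul_apply, Pi.sub_apply, Finset.sum_apply, smul_eq_mul,
    Xv, Yv, Zv]
  rw [Finset.sum_add_distrib, ← Finset.mul_sum, Finset.sum_comm]
  rw [countZ n k (by omega) w]
  rw [Finset.sum_congr rfl (fun j hj => by
    have hjn : j ≤ n := by
      rw [Finset.mem_Icc] at hj
      omega
    rw [Finset.sum_sub_distrib, ← Finset.mul_sum, ← Finset.mul_sum, Finset.sum_add_distrib,
      countX n j hjn w, countY n j hjn w, countZ n j hjn w])]
  have merge : (∑ j ∈ Finset.Icc k (n - k),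
        ((2 * (j:ℝ) - (n:ℝ)) *
            (((((n:ℝ) - (j:ℝ) - 2) * (if w.1 0 = j then (1:ℝ) else 0)) + (if w.1 1 + j ≤ n then (1:ℝ) else 0) +
                (if w.1 2 + j ≤ n then (1:ℝ) else 0)) +
              ((((n:ℝ) - (j:ℝ) - 2) * (if w.1 1 = j then (1:ℝ) else 0)) + (if w.1 2 + j ≤ n then (1:ℝ) else 0) +
                (if w.1 0 + j ≤ n then (1:ℝ) else 0))) -
          2 * ((n:ℝ) - (j:ℝ) - (k:ℝ) + 1) *
            ((((n:ℝ) - (j:ℝ) - 2) * (if w.1 2 = j then (1:ℝ) else 0)) + (if w.1 0 + j ≤ n then (1:ℝ) else 0) +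
              (if w.1 1 + j ≤ n then (1:ℝ) else 0))))
      = (∑ j ∈ Finset.Icc k (n - k),
          ((2*(j:ℝ)-(n:ℝ)) * ((k:ℝ)-(j:ℝ)) * (if w.1 0 = j then (1:ℝ) else 0)
            + (4*(j:ℝ) + (2*(k:ℝ) - 3*(n:ℝ) - 2)) * (if w.1 0 + j ≤ n then (1:ℝ) else 0)))
        + (∑ j ∈ Finset.Icc k (n - k),
          ((2*(j:ℝ)-(n:ℝ)) * ((k:ℝ)-(j:ℝ)) * (if w.1 1 = j then (1:ℝ) else 0)
            + (4*(j:ℝ) + (2*(k:ℝ) - 3*(n:ℝ) - 2)) * (if w.1 1 + j ≤ n then (1:ℝ) else 0)))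
        + (∑ j ∈ Finset.Icc k (n - k),
          (2*((j:ℝ)-(k:ℝ)) * ((n:ℝ)-(j:ℝ)-(k:ℝ)+1) * (if w.1 2 = j then (1:ℝ) else 0)
            + (4*(j:ℝ) + (-2*(n:ℝ))) * (if w.1 2 + j ≤ n then (1:ℝ) else 0)))
        + ((n:ℝ) - (k:ℝ) - 2) * (∑ j ∈ Finset.Icc k (n - k),
            ((2 * (j:ℝ) - (n:ℝ)) * ((if w.1 0 = j then (1:ℝ) else 0) + (if w.1 1 = j then (1:ℝ) else 0)) -
                2 * ((n:ℝ) - (j:ℝ) - (k:ℝ) + 1) * (if w.1 2 = j then (1:ℝ) else 0))) := by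
    rw [Finset.mul_sum, ← Finset.sum_add_distrib, ← Finset.sum_add_distrib,
      ← Finset.sum_add_distrib]
    exact Finset.sum_congr rfl fun j _ => by ring
  rw [merge]
  linear_combination (keyF n k (w.1 0) hk) + (keyF n k (w.1 1) hk) + (keyG n k (w.1 2) hk)

lemma Q_nonzero_part (n k : ℕ) (hk : 2 * k + 2 ≤ n) :
    (((n : ℝ) - 2*k + 1) * ((n : ℝ) - 2*k + 2)) • Zv n k
        + ∑ j ∈ Finset.Icc k (n-k),
            ((2*(j : ℝ) - n) • (Xv n j + Yv n j)
              - (2 * ((n : ℝ) - j - k + 1)) • Zv n j) ≠ 0 := by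
  intro h0
  set w0 : SRVert 3 n := mkv 2 k 0 (n-k) (by omega) with hw0
  have hv0 : w0.1 0 = 0 := by
    have := mkv_m1 (n := n) 2 k 0 (n-k) (by omega)
    rwa [show ((2:Fin 3)+1) = 0 from rfl] at this
  have hv1 : w0.1 1 = n - k := by
    have := mkv_m2 (n := n) 2 k 0 (n-k) (by omega)
    rwa [show ((2:Fin 3)+2) = 1 from rfl] at this
  have hv2 : w0.1 2 = k := mkv_m (n := n) 2 k 0 (n-k) (by omega)
  have h := congrFun h0 w0
  simp only [Pi.add_apply, Pi.smul_apply, Pi.sub_apply, Finset.sum_apply, smul_eq_mul,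
    Pi.zero_apply, Xv, Yv, Zv] at h
  rw [hv0, hv1, hv2] at h
  have hsum : ∑ j ∈ Finset.Icc k (n-k),
        ((2*(j:ℝ) - (n:ℝ)) * ((if (0:ℕ) = j then (1:ℝ) else 0) + (if n-k = j then (1:ℝ) else 0))
          - 2 * ((n:ℝ) - (j:ℝ) - (k:ℝ) + 1) * (if k = j then (1:ℝ) else 0))
      = ∑ j ∈ Finset.Icc k (n-k),
        ((if (0:ℕ) = j then (2*(j:ℝ) - (n:ℝ)) else 0)
          + ((if n-k = j then (2*(j:ℝ) - (n:ℝ)) else 0)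
            + (if k = j then -(2 * ((n:ℝ) - (j:ℝ) - (k:ℝ) + 1)) else 0))) :=
    Finset.sum_congr rfl fun j _ => by split_ifs <;> ring
  rw [hsum, Finset.sum_add_distrib, Finset.sum_add_distrib, Finset.sum_ite_eq,
    Finset.sum_ite_eq, Finset.sum_ite_eq, if_pos rfl,
    if_pos (Finset.mem_Icc.2 ⟨by omega, le_refl _⟩ : n - k ∈ Finset.Icc k (n-k)),
    if_pos (Finset.mem_Icc.2 ⟨le_refl _, by omega⟩ : k ∈ Finset.Icc k (n-k))] at h
  have hn : (2*(k:ℝ) + 2) ≤ (n:ℝ) := by exact_mod_cast hk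
  have hnk : ((n - k : ℕ) : ℝ) = (n:ℝ) - (k:ℝ) := by
    rw [Nat.cast_sub (by omega)]
  by_cases hk0 : (0:ℕ) ∈ Finset.Icc k (n-k)
  · rw [if_pos hk0] at h
    have hkz : k = 0 := by
      rw [Finset.mem_Icc] at hk0
      omega
    subst hkz
    rw [hnk] at h
    push_cast at h hn
    nlinarith [h, hn]
  · rw [if_neg hk0] at h
    rw [hnk] at h
    push_cast at h hn
    nlinarith [h, hn]

/-- for `0 ≤ k ≤ ⌊(n-2)/2⌋`, the vector `Q_k` is a nonzero
eigenvector of the adjacency matrix of `SR(3,n)` with eigenvalue `n - k - 2`. -/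
theorem Q_eigenvector (n k : ℕ) (hk : 2 * k + 2 ≤ n) :
    (((n : ℝ) - 2*k + 1) * ((n : ℝ) - 2*k + 2)) • Zv n k
        + ∑ j ∈ Finset.Icc k (n-k),
            ((2*(j : ℝ) - n) • (Xv n j + Yv n j)
              - (2 * ((n : ℝ) - j - k + 1)) • Zv n j) ≠ 0 ∧
    ((SR 3 n).adjMatrix ℝ).mulVec
        ((((n : ℝ) - 2*k + 1) * ((n : ℝ) - 2*k + 2)) • Zv n k
          + ∑ j ∈ Finset.Icc k (n-k),
              ((2*(j : ℝ) - n) • (Xv n j + Yv n j)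
                - (2 * ((n : ℝ) - j - k + 1)) • Zv n j))
      = ((n : ℝ) - k - 2) •
        ((((n : ℝ) - 2*k + 1) * ((n : ℝ) - 2*k + 2)) • Zv n k
          + ∑ j ∈ Finset.Icc k (n-k),
              ((2*(j : ℝ) - n) • (Xv n j + Yv n j)
                - (2 * ((n : ℝ) - j - k + 1)) • Zv n j)) := by
  exact ⟨Q_nonzero_part n k hk, Q_eigen_part n k hk⟩
end
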